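/- Let a : ℕ → ℤ be weakly decreasing, and suppose firing moves are legal at two distinct indices k₁ and k₂ (i.e., a(kᵢ) - a(kᵢ+1) ≥ 2 for i = 1,2). Let c₁ be the result of firing at k₁ and c₂ the result of firing at k₂. Then firing at k₂ is legal in c₁, firing at k₁ is legal in c₂, and performing the remaining fire in each case yields the same sequence. (Diamond lemma for unidirectional flow-firing.) -/

import Mathlib

/-- The result of a unidirectional firing move at index `k`. -/
def fire (a : ℕ → ℤ) (k : ℕ) : ℕ → ℤ :=
  fun i => if i = k then a k - 1 else if i = k + 1 then a (k + 1) + 1 else a i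

theorem diamond_lemma_unidirectional (a : ℕ → ℤ) (k₁ k₂ : ℕ) (hne : k₁ ≠ k₂)
    (hdec : ∀ j, a (j + 1) ≤ a j)
    (h₁ : a k₁ - a (k₁ + 1) ≥ 2) (h₂ : a k₂ - a (k₂ + 1) ≥ 2) :
    (fire a k₁) k₂ - (fire a k₁) (k₂ + 1) ≥ 2 ∧
    (fire a k₂) k₁ - (fire a k₂) (k₁ + 1) ≥ 2 ∧
    fire (fire a k₁) k₂ = fire (fire a k₂) k₁ := by
  refine ⟨?_, ?_, ?_⟩
  · simp only [fire]; split_ifs <;> subst_vars <;> omega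
  · simp only [fire]; split_ifs <;> subst_vars <;> omega
  · funext i
    simp only [fire]
    split_ifs <;> first | rfl | omega | (exfalso; omega) | (subst_vars; omega) | simp_all
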